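/- Let S_n be the simple symmetric random walk (sums of i.i.d. ±1 Bernoulli steps) and A_n = ∑_{k=1}^n S_k. Let Ω_n^+ = {A_1 ≥ 0, ..., A_n ≥ 0}. Then for every k > 0, P(Ω_n^+ ∩ {S_n = −k}) ≤ P(Ω_n^+ ∩ {S_n = k}). -/

import Mathlib

open MeasureTheory ProbabilityTheory Finset


open Finset
open scoped ENNReal

namespace PersistRefl

def pmStep (b : Bool) : ℤ := if b then 1 else -1

lemma pmStep_injective : Function.Injective pmStep := by
  intro a b h; cases a <;> cases b <;> simp [pmStep] at h ⊢

lemma pmStep_eq_or (b : Bool) : pmStep b = 1 ∨ pmStep b = -1 := by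
  cases b <;> simp [pmStep]

lemma pmStep_not (b : Bool) : pmStep (!b) = -pmStep b := by
  cases b <;> simp [pmStep]

variable (n : ℕ)

def stepOf (ε : Fin n → Bool) (i : ℕ) : ℤ :=
  if h : i - 1 < n ∧ 1 ≤ i then pmStep (ε ⟨i - 1, h.1⟩) else 1

lemma stepOf_eq_or (ε : Fin n → Bool) (i : ℕ) : stepOf n ε i = 1 ∨ stepOf n ε i = -1 := by
  unfold stepOf; split
  · exact pmStep_eq_or _
  · exact Or.inl rfl

def Sv (ε : Fin n → Bool) (j : ℕ) : ℤ := ∑ i ∈ Icc 1 j, stepOf n ε i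

def Av (ε : Fin n → Bool) (j : ℕ) : ℤ := ∑ i ∈ Icc 1 j, Sv n ε i

lemma Sv_zero (ε : Fin n → Bool) : Sv n ε 0 = 0 := by simp [Sv]

lemma Av_zero (ε : Fin n → Bool) : Av n ε 0 = 0 := by simp [Av]

lemma Sv_succ (ε : Fin n → Bool) (j : ℕ) :
    Sv n ε (j + 1) = Sv n ε j + stepOf n ε (j + 1) := by
  unfold Sv; rw [Finset.sum_Icc_succ_top (by omega)]

lemma Av_succ (ε : Fin n → Bool) (j : ℕ) :
    Av n ε (j + 1) = Av n ε j + Sv n ε (j + 1) := by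
  unfold Av; rw [Finset.sum_Icc_succ_top (by omega)]

/-- Discrete IVT: the walk hits 0 between a positive and negative value. -/
lemma exists_zero_between (ε : Fin n → Bool) {a b : ℕ} (hab : a ≤ b)
    (ha : 0 < Sv n ε a) (hb : Sv n ε b < 0) :
    ∃ c, a ≤ c ∧ c ≤ b ∧ Sv n ε c = 0 := by
  have hP : Sv n ε (a + (b - a)) ≤ 0 := by
    have : a + (b - a) = b := by omega
    rw [this]; exact le_of_lt hb
  have hex : ∃ m, Sv n ε (a + m) ≤ 0 := ⟨b - a, hP⟩
  let c := Nat.find hex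
  have hc : Sv n ε (a + c) ≤ 0 := Nat.find_spec hex
  have hcb : c ≤ b - a := Nat.find_min' _ hP
  have hcpos : 0 < c := by
    rcases Nat.eq_zero_or_pos c with h | h
    · exfalso; rw [h] at hc; simp at hc; omega
    · exact h
  have hprev : ¬ Sv n ε (a + (c - 1)) ≤ 0 := Nat.find_min hex (by omega)
  push_neg at hprev
  have hstep : Sv n ε (a + c) = Sv n ε (a + (c - 1)) + stepOf n ε (a + (c-1) + 1) := by
    have : a + c = (a + (c - 1)) + 1 := by omega
    rw [this, Sv_succ]
  have := stepOf_eq_or n ε (a + (c-1) + 1)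
  refine ⟨a + c, by omega, by omega, ?_⟩
  omega

def lastZero (ε : Fin n → Bool) : ℕ := Nat.findGreatest (fun j => Sv n ε j = 0) n

lemma lastZero_le (ε : Fin n → Bool) : lastZero n ε ≤ n := Nat.findGreatest_le n

lemma Sv_lastZero (ε : Fin n → Bool) : Sv n ε (lastZero n ε) = 0 := by
  exact Nat.findGreatest_spec (P := fun j => Sv n ε j = 0) (Nat.zero_le n) (Sv_zero n ε)

lemma Sv_ne_of_gt (ε : Fin n → Bool) {j : ℕ} (h1 : lastZero n ε < j) (h2 : j ≤ n) :
    Sv n ε j ≠ 0 := Nat.findGreatest_is_greatest (P := fun j => Sv n ε j = 0) h1 h2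

lemma Sv_neg_of (ε : Fin n → Bool) (hn : Sv n ε n < 0) {j : ℕ}
    (h1 : lastZero n ε < j) (h2 : j ≤ n) : Sv n ε j < 0 := by
  rcases lt_trichotomy (Sv n ε j) 0 with h | h | h
  · exact h
  · exact absurd h (Sv_ne_of_gt n ε h1 h2)
  · obtain ⟨c, hc1, hc2, hc3⟩ := exists_zero_between n ε h2 h hn
    exact absurd hc3 (Sv_ne_of_gt n ε (lt_of_lt_of_le h1 hc1) hc2)

def T (ε : Fin n → Bool) : Fin n → Bool :=
  fun i => if (i : ℕ) < lastZero n ε then ε i else !(ε i)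

lemma stepOf_T (ε : Fin n → Bool) {i : ℕ} (h1 : 1 ≤ i) (h2 : i ≤ n) :
    stepOf n (T n ε) i = if i ≤ lastZero n ε then stepOf n ε i else -stepOf n ε i := by
  have h : i - 1 < n ∧ 1 ≤ i := ⟨by omega, h1⟩
  unfold stepOf T
  rw [dif_pos h, dif_pos h]
  by_cases hle : i ≤ lastZero n ε
  · have hlt : (i - 1) < lastZero n ε := by omega
    simp [hlt, hle]
  · have hlt : ¬ (i - 1) < lastZero n ε := by omega
    simp [hlt, hle, pmStep_not]

lemma Sv_T_le (ε : Fin n → Bool) : ∀ j, j ≤ lastZero n ε → Sv n (T n ε) j = Sv n ε j := by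
  intro j
  induction j with
  | zero => intro _; simp [Sv_zero]
  | succ j ih =>
    intro hj
    have hℓn := lastZero_le n ε
    rw [Sv_succ, Sv_succ, ih (by omega), stepOf_T n ε (by omega) (by omega), if_pos hj]

lemma Sv_T_ge (ε : Fin n → Bool) :
    ∀ j, lastZero n ε ≤ j → j ≤ n → Sv n (T n ε) j = -Sv n ε j := by
  intro j hj
  induction j, hj using Nat.le_induction with
  | base =>
    intro _
    rw [Sv_T_le n ε _ le_rfl, Sv_lastZero]
    ring
  | succ j hj ih =>
    intro hjn
    rw [Sv_succ, Sv_succ, ih (by omega), stepOf_T n ε (by omega) (by omega),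
      if_neg (by omega)]
    ring

lemma Av_T_le (ε : Fin n → Bool) (j : ℕ) (hj : j ≤ lastZero n ε) :
    Av n (T n ε) j = Av n ε j := by
  unfold Av
  refine Finset.sum_congr rfl fun i hi => Sv_T_le n ε i ?_
  simp only [mem_Icc] at hi; omega

lemma Av_T_ge (ε : Fin n → Bool) (hn : Sv n ε n < 0) :
    ∀ j, lastZero n ε ≤ j → j ≤ n → Av n ε (lastZero n ε) ≤ Av n (T n ε) j := by
  intro j hj
  induction j, hj using Nat.le_induction with
  | base => intro _; rw [Av_T_le n ε _ le_rfl]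
  | succ j hj ih =>
    intro hjn
    rw [Av_succ]
    have h1 : Sv n (T n ε) (j+1) = -Sv n ε (j+1) := Sv_T_ge n ε (j+1) (by omega) hjn
    have h2 : Sv n ε (j+1) < 0 := Sv_neg_of n ε hn (by omega) hjn
    have h3 := ih (by omega)
    omega

lemma lastZero_T (ε : Fin n → Bool) : lastZero n (T n ε) = lastZero n ε := by
  apply le_antisymm
  · by_contra h
    push_neg at h
    have h2 : lastZero n (T n ε) ≤ n := lastZero_le n _
    have h3 : Sv n (T n ε) (lastZero n (T n ε)) = 0 := Sv_lastZero n _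
    rw [Sv_T_ge n ε _ (le_of_lt h) h2] at h3
    exact Sv_ne_of_gt n ε h h2 (by omega)
  · apply Nat.le_findGreatest (lastZero_le n ε)
    rw [Sv_T_le n ε _ le_rfl]
    exact Sv_lastZero n ε

lemma T_invol (ε : Fin n → Bool) : T n (T n ε) = ε := by
  funext i
  rw [show T n (T n ε) i
      = if (i : ℕ) < lastZero n (T n ε) then T n ε i else !(T n ε i) from rfl,
    lastZero_T]
  unfold T
  by_cases h : (i : ℕ) < lastZero n ε <;> simp [h]

open Classical in
lemma card_le (k : ℤ) (hk : 0 < k) :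
    (univ.filter fun ε : Fin n → Bool =>
      (∀ j ∈ Icc 1 n, 0 ≤ Av n ε j) ∧ Sv n ε n = -k).card ≤
    (univ.filter fun ε : Fin n → Bool =>
      (∀ j ∈ Icc 1 n, 0 ≤ Av n ε j) ∧ Sv n ε n = k).card := by
  apply Finset.card_le_card_of_injOn (T n)
  · intro ε hε
    simp only [mem_coe, mem_filter, mem_univ, true_and] at hε ⊢
    obtain ⟨hAv, hSn⟩ := hε
    have hn : Sv n ε n < 0 := by rw [hSn]; omega
    have hℓ := lastZero_le n ε
    constructor
    · intro j hj
      simp only [mem_Icc] at hj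
      by_cases hjle : j ≤ lastZero n ε
      · rw [Av_T_le n ε j hjle]
        exact hAv j (by simp only [mem_Icc]; omega)
      · have h0 : 0 ≤ Av n ε (lastZero n ε) := by
          rcases Nat.eq_zero_or_pos (lastZero n ε) with h | h
          · rw [h, Av_zero]
          · exact hAv _ (by simp only [mem_Icc]; omega)
        have := Av_T_ge n ε hn j (by omega) hj.2
        omega
    · rw [Sv_T_ge n ε n hℓ le_rfl, hSn]; ring
  · intro a _ b _ hab
    have h := congrArg (T n) hab
    rwa [T_invol, T_invol] at h


open MeasureTheory ProbabilityTheory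

open Classical in
lemma prob_eq {Ω : Type*} [MeasureSpace Ω] [IsProbabilityMeasure (ℙ : Measure Ω)]
    (X : ℕ → Ω → ℤ) (hmeas : ∀ i, Measurable (X i))
    (hindep : iIndepFun X ℙ)
    (hdist : ∀ i, ℙ {ω | X i ω = 1} = 1/2 ∧ ℙ {ω | X i ω = -1} = 1/2)
    (S A : ℕ → Ω → ℤ)
    (hS : ∀ n ω, S n ω = ∑ i ∈ Finset.Icc 1 n, X i ω)
    (hA : ∀ n ω, A n ω = ∑ i ∈ Finset.Icc 1 n, S i ω)
    (n : ℕ) (c : ℤ) :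
    ℙ ({ω | ∀ j ∈ Finset.Icc 1 n, 0 ≤ A j ω} ∩ {ω | S n ω = c})
      = (univ.filter fun ε : Fin n → Bool =>
          (∀ j ∈ Icc 1 n, 0 ≤ Av n ε j) ∧ Sv n ε n = c).card * (2⁻¹ : ℝ≥0∞) ^ n := by
  classical
  have hSmeas : ∀ j, Measurable (S j) := by
    intro j
    rw [funext (hS j)]
    exact Finset.measurable_sum _ fun i _ => hmeas i
  have hAmeas : ∀ j, Measurable (A j) := by
    intro j
    rw [funext (hA j)]
    exact Finset.measurable_sum _ fun i _ => hSmeas i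
  set E : Set Ω := {ω | ∀ j ∈ Finset.Icc 1 n, 0 ≤ A j ω} ∩ {ω | S n ω = c} with hE
  have hEmeas : MeasurableSet E := by
    apply MeasurableSet.inter
    · have h : {ω : Ω | ∀ j ∈ Finset.Icc 1 n, 0 ≤ A j ω}
          = ⋂ j ∈ Finset.Icc 1 n, {ω | 0 ≤ A j ω} := by
        ext ω; simp
      rw [h]
      exact MeasurableSet.biInter (Finset.countable_toSet _) fun j _ =>
        measurableSet_le measurable_const (hAmeas j)
    · exact (hSmeas n) (measurableSet_singleton c)
  set Ev : (Fin n → Bool) → Set Ω :=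
    fun ε => ⋂ i ∈ Finset.Icc 1 n, X i ⁻¹' {stepOf n ε i} with hEvdef
  have hEvmeas : ∀ ε, MeasurableSet (Ev ε) := fun ε =>
    MeasurableSet.biInter (Finset.countable_toSet _) fun i _ =>
      (hmeas i) (measurableSet_singleton _)
  have hEvmem : ∀ ε ω, ω ∈ Ev ε ↔ ∀ i ∈ Finset.Icc 1 n, X i ω = stepOf n ε i := by
    intro ε ω
    simp [hEvdef, Set.mem_iInter]
  have hhalf : ∀ (i : ℕ) (v : ℤ), v = 1 ∨ v = -1 → ℙ (X i ⁻¹' {v}) = 2⁻¹ := by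
    intro i v hv
    rcases hv with h | h <;> subst h
    · have h1 := (hdist i).1
      rw [show X i ⁻¹' {(1:ℤ)} = {ω | X i ω = 1} from rfl, h1, one_div]
    · have h1 := (hdist i).2
      rw [show X i ⁻¹' {(-1:ℤ)} = {ω | X i ω = -1} from rfl, h1, one_div]
  have hEvprob : ∀ ε, ℙ (Ev ε) = 2⁻¹ ^ n := by
    intro ε
    rw [hEvdef]
    rw [hindep.meas_biInter (fun i _ => ⟨{stepOf n ε i}, measurableSet_singleton _, rfl⟩)]
    rw [Finset.prod_congr rfl (fun i _ => hhalf i _ (stepOf_eq_or n ε i)),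
      Finset.prod_const, Nat.card_Icc]
    norm_num
  have hEvdisj : Pairwise (Function.onFun Disjoint Ev) := by
    intro ε ε' hne
    have hm : ∃ m : Fin n, ε m ≠ ε' m := by
      by_contra h
      push_neg at h
      exact hne (funext h)
    obtain ⟨m, hm⟩ := hm
    show Disjoint (Ev ε) (Ev ε')
    have hmem : ((m : ℕ) + 1) ∈ Finset.Icc 1 n := by
      simp only [Finset.mem_Icc]
      exact ⟨by omega, by omega⟩
    rw [Set.disjoint_left]
    intro ω hω hω'
    have h1 := (hEvmem ε ω).1 hω ((m : ℕ) + 1) hmem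
    have h2 := (hEvmem ε' ω).1 hω' ((m : ℕ) + 1) hmem
    have h : (m : ℕ) + 1 - 1 < n ∧ 1 ≤ (m : ℕ) + 1 := ⟨by omega, by omega⟩
    rw [h1] at h2
    unfold stepOf at h2
    rw [dif_pos h, dif_pos h] at h2
    exact hm (pmStep_injective h2)
  have hNulli : ∀ i, ℙ {ω : Ω | ¬(X i ω = 1 ∨ X i ω = -1)} = 0 := by
    intro i
    have hd : Disjoint {ω : Ω | X i ω = 1} {ω | X i ω = -1} := by
      rw [Set.disjoint_left]
      intro ω h1 h2
      simp only [Set.mem_setOf_eq] at h1 h2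
      omega
    have hu : ℙ ({ω : Ω | X i ω = 1} ∪ {ω | X i ω = -1}) = 1 := by
      rw [measure_union hd ((hmeas i) (measurableSet_singleton (-1))),
        (hdist i).1, (hdist i).2]
      rw [one_div]
      exact ENNReal.inv_two_add_inv_two
    have hc : {ω : Ω | ¬(X i ω = 1 ∨ X i ω = -1)}
        = ({ω : Ω | X i ω = 1} ∪ {ω | X i ω = -1})ᶜ := by
      ext ω
      simp [not_or]
    have hmu : MeasurableSet ({ω : Ω | X i ω = 1} ∪ {ω | X i ω = -1}) :=
      ((hmeas i) (measurableSet_singleton 1)).union ((hmeas i) (measurableSet_singleton (-1)))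
    rw [hc, measure_compl hmu (measure_ne_top _ _), hu, measure_univ, tsub_self]
  have hNull : ℙ (⋃ i ∈ Finset.Icc 1 n, {ω : Ω | ¬(X i ω = 1 ∨ X i ω = -1)}) = 0 :=
    measure_iUnion_null fun i => measure_iUnion_null fun _ => hNulli i
  have hcover : ∀ ω : Ω, (∀ i ∈ Finset.Icc 1 n, X i ω = 1 ∨ X i ω = -1) →
      ∃ ε, ω ∈ Ev ε := by
    intro ω hω
    refine ⟨fun m => decide (X ((m : ℕ) + 1) ω = 1), (hEvmem _ ω).2 fun i hi => ?_⟩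
    simp only [Finset.mem_Icc] at hi
    have h : i - 1 < n ∧ 1 ≤ i := ⟨by omega, hi.1⟩
    unfold stepOf
    rw [dif_pos h]
    have hi1 : (i - 1) + 1 = i := by omega
    rcases hω i (Finset.mem_Icc.2 hi) with h1 | h1
    · simp [pmStep, hi1, h1]
    · have hne : X i ω ≠ 1 := by rw [h1]; decide
      simp [pmStep, hi1, h1, hne]
  have hsplit : ℙ E = ∑ ε : Fin n → Bool, ℙ (E ∩ Ev ε) := by
    have hU : MeasurableSet (⋃ ε : Fin n → Bool, Ev ε) := MeasurableSet.iUnion hEvmeas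
    have h1 : ℙ E = ℙ (E ∩ ⋃ ε, Ev ε) + ℙ (E \ ⋃ ε, Ev ε) :=
      (measure_inter_add_diff E hU).symm
    have h2 : ℙ (E \ ⋃ ε, Ev ε) = 0 := by
      refine measure_mono_null (fun ω hω => ?_) hNull
      by_contra hb
      have hall : ∀ i ∈ Finset.Icc 1 n, X i ω = 1 ∨ X i ω = -1 := by
        intro i hi
        by_contra hx
        exact hb (Set.mem_iUnion₂.2 ⟨i, hi, hx⟩)
      obtain ⟨ε, hε⟩ := hcover ω hall
      exact hω.2 (Set.mem_iUnion.2 ⟨ε, hε⟩)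
    rw [h1, h2, add_zero, Set.inter_iUnion,
      measure_iUnion (fun ε ε' hne => ((hEvdisj hne).mono
        Set.inter_subset_right Set.inter_subset_right))
        (fun ε => hEmeas.inter (hEvmeas ε)),
      tsum_fintype]
  have hterm : ∀ ε, ℙ (E ∩ Ev ε)
      = if (∀ j ∈ Icc 1 n, 0 ≤ Av n ε j) ∧ Sv n ε n = c then (2⁻¹ : ℝ≥0∞) ^ n else 0 := by
    intro ε
    have hkey : ∀ ω ∈ Ev ε, ∀ j ≤ n, S j ω = Sv n ε j := by
      intro ω hω j hj
      rw [hS j]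
      refine Finset.sum_congr rfl fun i hi => ?_
      simp only [Finset.mem_Icc] at hi
      exact (hEvmem ε ω).1 hω i (Finset.mem_Icc.2 ⟨hi.1, le_trans hi.2 hj⟩)
    have hkeyA : ∀ ω ∈ Ev ε, ∀ j ≤ n, A j ω = Av n ε j := by
      intro ω hω j hj
      rw [hA j]
      exact Finset.sum_congr rfl fun i hi =>
        hkey ω hω i (le_trans (Finset.mem_Icc.1 hi).2 hj)
    by_cases hgood : (∀ j ∈ Icc 1 n, 0 ≤ Av n ε j) ∧ Sv n ε n = c
    · rw [if_pos hgood, ← hEvprob ε]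
      congr 1
      rw [Set.inter_eq_right]
      intro ω hω
      refine ⟨fun j hj => ?_, ?_⟩
      · show (0 : ℤ) ≤ A j ω
        rw [hkeyA ω hω j (Finset.mem_Icc.1 hj).2]
        exact hgood.1 j hj
      · show S n ω = c
        rw [hkey ω hω n le_rfl]
        exact hgood.2
    · rw [if_neg hgood]
      have hempty : E ∩ Ev ε = ∅ := by
        rw [Set.eq_empty_iff_forall_notMem]
        rintro ω ⟨hωE, hωEv⟩
        refine hgood ⟨fun j hj => ?_, ?_⟩
        · rw [← hkeyA ω hωEv j (Finset.mem_Icc.1 hj).2]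
          exact hωE.1 j hj
        · rw [← hkey ω hωEv n le_rfl]
          exact hωE.2
      rw [hempty, measure_empty]
  rw [hsplit, Finset.sum_congr rfl (fun ε _ => hterm ε), ← Finset.sum_filter,
    Finset.sum_const, nsmul_eq_mul]
  congr!

end PersistRefl


/-- For the simple symmetric random walk `S` with integrated walk `A` and
`Ω_n^+ = {A_1 ≥ 0, …, A_n ≥ 0}`, for every `k > 0` one has
`P(Ω_n^+ ∩ {S_n = -k}) ≤ P(Ω_n^+ ∩ {S_n = k})`. -/
theorem persistence_reflection
    {Ω : Type*} [MeasureSpace Ω] [IsProbabilityMeasure (ℙ : Measure Ω)]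
    (X : ℕ → Ω → ℤ) (hmeas : ∀ i, Measurable (X i))
    (hindep : iIndepFun X ℙ)
    (hdist : ∀ i, ℙ {ω | X i ω = 1} = 1/2 ∧ ℙ {ω | X i ω = -1} = 1/2)
    (S A : ℕ → Ω → ℤ)
    (hS : ∀ n ω, S n ω = ∑ i ∈ Finset.Icc 1 n, X i ω)
    (hA : ∀ n ω, A n ω = ∑ i ∈ Finset.Icc 1 n, S i ω)
    (n : ℕ) (k : ℤ) (hk : 0 < k) :
    ℙ ({ω | ∀ j ∈ Finset.Icc 1 n, 0 ≤ A j ω} ∩ {ω | S n ω = -k})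
      ≤ ℙ ({ω | ∀ j ∈ Finset.Icc 1 n, 0 ≤ A j ω} ∩ {ω | S n ω = k}) := by
  rw [PersistRefl.prob_eq X hmeas hindep hdist S A hS hA n (-k),
      PersistRefl.prob_eq X hmeas hindep hdist S A hS hA n k]
  exact mul_le_mul_left (Nat.cast_le.2 (PersistRefl.card_le n k hk)) _
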